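/- arXiv:1504.07257 — 4 statements merged into one kernel-verified Lean document; each statement's English description precedes it below -/
import Mathlib

section
/- Let R be a ring, S_l(R) the largest left Ore set of R consisting of regular elements, Q_l(R) := S_l(R)⁻¹R, 'S_l(R) the largest left denominator set of R contained in 'C_R, 'Q_l(R) := 'S_l(R)⁻¹R and 'a := ass_R('S_l(R)). Then: (1) S_l(R) ⊆ 'S_l(R) ⊆ 'C_R, and hence ass_R(S_l(R)) ⊆ ass_R('S_l(R)) ⊆ ass_R('C_R); (2) the map φ : Q_l(R) → 'Q_l(R), s⁻¹r ↦ s⁻¹r, is a well-defined R-ring homomorphism with kernel S_l(R)⁻¹'a; (3) φ is an isomorphism if and only if 'a = 0, if and only if S_l(R) = 'S_l(R); (4) the rings Q_l(R) and 'Q_l(R) are R-isomorphic if and only if one of the equivalent conditions of (3) holds. -/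
universe u

namespace Bavula

/-- The set of left regular elements of `R`. -/
def lReg (R : Type u) [Ring R] : Set R := {c : R | ∀ x : R, x * c = 0 → x = 0}

/-- The set of right regular elements of `R`. -/
def rReg (R : Type u) [Ring R] : Set R := {c : R | ∀ x : R, c * x = 0 → x = 0}

/-- The set of regular elements of `R`. -/
def reg (R : Type u) [Ring R] : Set R := lReg R ∩ rReg R

/-- `S` is a multiplicative set of `R`. -/
def IsMulSet {R : Type u} [Ring R] (S : Set R) : Prop :=
  (1 : R) ∈ S ∧ (∀ a ∈ S, ∀ b ∈ S, a * b ∈ S) ∧ (0 : R) ∉ S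

/-- `S` is a left Ore set of `R`. -/
def IsLeftOre {R : Type u} [Ring R] (S : Set R) : Prop :=
  IsMulSet S ∧ ∀ s ∈ S, ∀ r : R, ∃ s' ∈ S, ∃ r' : R, s' * r = r' * s

/-- `S` is a left denominator set of `R`. -/
def IsLeftDenom {R : Type u} [Ring R] (S : Set R) : Prop :=
  IsLeftOre S ∧ ∀ r : R, ∀ s ∈ S, r * s = 0 → ∃ t ∈ S, t * r = 0

/-- `S` is a right Ore set of `R`. -/
def IsRightOre {R : Type u} [Ring R] (S : Set R) : Prop :=
  IsMulSet S ∧ ∀ s ∈ S, ∀ r : R, ∃ s' ∈ S, ∃ r' : R, r * s' = s * r'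

/-- `S` is a right denominator set of `R`. -/
def IsRightDenom {R : Type u} [Ring R] (S : Set R) : Prop :=
  IsRightOre S ∧ ∀ r : R, ∀ s ∈ S, s * r = 0 → ∃ t ∈ S, r * t = 0

/-- `ass_R(S) = {r ∈ R | s r = 0 for some s ∈ S}`. -/
def ass {R : Type u} [Ring R] (S : Set R) : Set R := {r : R | ∃ s ∈ S, s * r = 0}

/-- `{r ∈ R | r s = 0 for some s ∈ S}` (the right-sided analogue of `ass`). -/
def rass {R : Type u} [Ring R] (S : Set R) : Set R := {r : R | ∃ s ∈ S, r * s = 0}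

/-- `S` is a (left) dense subset of `T`. -/
def DenseIn {R : Type u} [Ring R] (S T : Set R) : Prop := ∀ t ∈ T, ∃ r : R, r * t ∈ S

/-- `f : R →+* Q` realizes `Q` as the left localization `S⁻¹R` of `R` at `S`:
elements of `S` become units, every element of `Q` is a left fraction `(f s)⁻¹ * (f r)`,
and the kernel of `f` is `ass S`. -/
def IsLeftLoc {R : Type u} [Ring R] (S : Set R) {Q : Type u} [Ring Q] (f : R →+* Q) : Prop :=
  (∀ s ∈ S, IsUnit (f s)) ∧
  (∀ q : Q, ∃ s ∈ S, ∃ r : R, f s * q = f r) ∧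
  (∀ r : R, f r = 0 ↔ r ∈ ass S)

/-- `π : R →+* Q` realizes `Q` as the quotient of `R` by the set `a`
(in particular, `a` is then a two-sided ideal of `R`). -/
def IsQuotBy {R : Type u} [Ring R] (a : Set R) {Q : Type u} [Ring Q] (π : R →+* Q) : Prop :=
  Function.Surjective π ∧ ∀ r : R, π r = 0 ↔ r ∈ a

/-- A semiprime ring (no nonzero nilpotent ideals), elementwise: `x R x = 0 → x = 0`. -/
def SemiprimeRing (A : Type u) [Ring A] : Prop := ∀ x : A, (∀ r : A, x * r * x = 0) → x = 0

/-- `a` is a two-sided ideal of `R`, given as a set. -/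
def IsIdealSet {R : Type u} [Ring R] (a : Set R) : Prop :=
  (0 : R) ∈ a ∧ (∀ x ∈ a, ∀ y ∈ a, x + y ∈ a) ∧ ∀ r : R, ∀ x ∈ a, r * x ∈ a ∧ x * r ∈ a

/-- `a` is a semiprime (two-sided) ideal of `R`, i.e. `R/a` is a semiprime ring. -/
def IsSemiprimeIdealSet {R : Type u} [Ring R] (a : Set R) : Prop :=
  IsIdealSet a ∧ ∀ x : R, (∀ r : R, x * r * x ∈ a) → x ∈ a

/-- `a` is a prime (two-sided) ideal of `R`, i.e. `R/a` is a prime ring. -/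
def IsPrimeIdealSet {R : Type u} [Ring R] (a : Set R) : Prop :=
  IsIdealSet a ∧ a ≠ Set.univ ∧ ∀ x y : R, (∀ r : R, x * r * y ∈ a) → x ∈ a ∨ y ∈ a

/-- The prime radical of `A`: the intersection of all prime ideals of `A`. -/
def primeRadical (A : Type u) [Ring A] : Set A :=
  {x : A | ∀ p : Set A, IsPrimeIdealSet p → x ∈ p}

/-- The set of prime ideals of `R` minimal over `a`. -/
def minPrimesOver {R : Type u} [Ring R] (a : Set R) : Set (Set R) :=
  {p : Set R | IsPrimeIdealSet p ∧ a ⊆ p ∧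
    ∀ q : Set R, IsPrimeIdealSet q → a ⊆ q → q ⊆ p → q = p}

/-- A simple ring: nontrivial, with no two-sided ideals other than `0` and `A`. -/
def SimpleRing (A : Type u) [Ring A] : Prop :=
  (0 : A) ≠ 1 ∧ ∀ a : Set A, IsIdealSet a → a = {0} ∨ a = Set.univ

/-- A simple (left) Artinian ring. -/
def SimpleArtinianRing (A : Type u) [Ring A] : Prop := SimpleRing A ∧ IsArtinianRing A

/-- `I` is an essential left ideal of `R`. -/
def EssIdeal {R : Type u} [Ring R] (I : Submodule R R) : Prop :=
  ∀ J : Submodule R R, J ≠ ⊥ → I ⊓ J ≠ ⊥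

/-- `N` is an essential submodule of the left ideal `M`. -/
def EssIn {R : Type u} [Ring R] (N M : Submodule R R) : Prop :=
  N ≤ M ∧ ∀ W : Submodule R R, W ≤ M → W ≠ ⊥ → N ⊓ W ≠ ⊥

/-- `U` is a uniform left ideal of `R`. -/
def UniformIdeal {R : Type u} [Ring R] (U : Submodule R R) : Prop :=
  U ≠ ⊥ ∧ ∀ V W : Submodule R R, V ≤ U → W ≤ U → V ≠ ⊥ → W ≠ ⊥ → V ⊓ W ≠ ⊥

/-- `udim(_A A) < ∞`: there is a finite direct sum of uniform left ideals of `A`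
which is an essential left ideal of `A`. -/
def FinUdim (A : Type u) [Ring A] : Prop :=
  ∃ (n : ℕ) (U : Fin (n + 1) → Submodule A A),
    (∀ i, UniformIdeal (U i)) ∧
    (∀ i, U i ⊓ (⨆ j, ⨆ (_ : j ≠ i), U j) = ⊥) ∧
    EssIdeal (⨆ i, U i)

/-- `'C_V = {v ∈ V | right multiplication by v is injective on V}` for a left ideal `V`. -/
def lRegIn {R : Type u} [Ring R] (V : Submodule R R) : Set R :=
  {v : R | v ∈ V ∧ ∀ x ∈ V, x * v = 0 → x = 0}

/-- The family `P` of subsets of `R` satisfies the ascending chain condition. -/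
def AccOnSets {R : Type u} [Ring R] (P : Set (Set R)) : Prop :=
  ∀ f : ℕ → Set R, (∀ n, f n ∈ P) → (∀ n, f n ⊆ f (n + 1)) →
    ∃ N : ℕ, ∀ n : ℕ, N ≤ n → f n = f N

/-- The left annihilator of `X` in `R`. -/
def lAnn {R : Type u} [Ring R] (X : Set R) : Set R := {r : R | ∀ x ∈ X, r * x = 0}

/-- The right annihilator of `X` in `R`. -/
def rAnn {R : Type u} [Ring R] (X : Set R) : Set R := {r : R | ∀ x ∈ X, x * r = 0}

/-- A left Goldie ring: a.c.c. on left annihilators and finite left uniform dimension. -/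
def LeftGoldie (A : Type u) [Ring A] : Prop :=
  AccOnSets {B : Set A | ∃ X : Set A, B = lAnn X} ∧ FinUdim A

/-- The set of maximal left denominator sets of `A`. -/
def maxLeftDenom (A : Type u) [Ring A] : Set (Set A) :=
  {S : Set A | IsLeftDenom S ∧ ∀ T : Set A, IsLeftDenom T → S ⊆ T → S = T}

/-- `S_p = {c ∈ R | c + p ∈ C_{R/p}}`: the elements regular modulo `p`. -/
def regMod {R : Type u} [Ring R] (p : Set R) : Set R :=
  {c : R | (∀ x : R, x * c ∈ p → x ∈ p) ∧ ∀ x : R, c * x ∈ p → x ∈ p}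

/-- `I` is a right ideal of `R`, given as a set. -/
def IsRightIdealSet {R : Type u} [Ring R] (I : Set R) : Prop :=
  (0 : R) ∈ I ∧ (∀ x ∈ I, ∀ y ∈ I, x + y ∈ I) ∧ ∀ x ∈ I, ∀ r : R, x * r ∈ I

/-- The left singular ideal `ζ_l(R, a)` of `R` over `a`. -/
def leftSingularOver {R : Type u} [Ring R] (a : Set R) : Set R :=
  {r : R | ∃ I : Submodule R R, EssIdeal I ∧ a ⊆ I ∧ ∀ x ∈ I, x * r = 0}
/-- Auxiliary: construction of the canonical homomorphism `φ : Ql →+* Qd`. -/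
theorem exists_phi_aux {R : Type u} [Ring R] (Sl Sd : Set R)
    (hOre : IsLeftOre Sl) (hreg : ∀ s ∈ Sl, ∀ r : R, s * r = 0 → r = 0) (hsub : Sl ⊆ Sd)
    {Ql Qd : Type u} [Ring Ql] [Ring Qd] (fl : R →+* Ql) (fd : R →+* Qd)
    (hlocl : IsLeftLoc Sl fl) (hlocd : IsLeftLoc Sd fd) :
    ∃ φ : Ql →+* Qd, ∀ q : Ql, ∀ s ∈ Sl, ∀ r : R, fl s * q = fl r → fd s * φ q = fd r := by
  classical
  obtain ⟨hl1, hlfrac, hlker⟩ := hlocl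
  obtain ⟨hd1, -, -⟩ := hlocd
  have h1Sl : (1:R) ∈ Sl := hOre.1.1
  have hmulSl : ∀ a ∈ Sl, ∀ b ∈ Sl, a * b ∈ Sl := hOre.1.2.1
  have hinj : ∀ a b : R, fl a = fl b → a = b := by
    intro a b h
    have h0 : fl (a - b) = 0 := by rw [map_sub, h, sub_self]
    obtain ⟨s, hs, hsr⟩ := (hlker (a - b)).1 h0
    exact sub_eq_zero.mp (hreg s hs _ hsr)
  have hU : ∀ s ∈ Sl, IsUnit (fd s) := fun s hs => hd1 s (hsub hs)
  choose sfun hsfun rfun hrfun using hlfrac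
  obtain ⟨F, spec⟩ : ∃ F : Ql → Qd, ∀ q : Ql, ∀ s ∈ Sl, ∀ r : R,
      fl s * q = fl r → fd s * F q = fd r := by
    refine ⟨fun q => Ring.inverse (fd (sfun q)) * fd (rfun q), ?_⟩
    intro q s hs r h
    dsimp only
    obtain ⟨t, ht, u, htu⟩ := hOre.2 s hs (sfun q)
    -- t * sfun q = u * s
    have h2 : t * rfun q = u * r := by
      apply hinj
      calc fl (t * rfun q) = fl t * (fl (sfun q) * q) := by rw [map_mul, hrfun q]
        _ = fl (t * sfun q) * q := by rw [map_mul, mul_assoc]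
        _ = fl u * (fl s * q) := by rw [htu, map_mul, mul_assoc]
        _ = fl (u * r) := by rw [h, map_mul]
    have hts : IsUnit (fd (t * sfun q)) := hU _ (hmulSl t ht _ (hsfun q))
    have e1 : fd (t * sfun q) * (Ring.inverse (fd (sfun q)) * fd (rfun q))
        = fd t * fd (rfun q) := by
      rw [map_mul, mul_assoc, ← mul_assoc (fd (sfun q)),
        Ring.mul_inverse_cancel _ (hU _ (hsfun q)), one_mul]
    have e2 : fd (t * sfun q) * (Ring.inverse (fd s) * fd r) = fd u * fd r := by
      rw [htu, map_mul, mul_assoc, ← mul_assoc (fd s),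
        Ring.mul_inverse_cancel _ (hU s hs), one_mul]
    have e3 : Ring.inverse (fd (sfun q)) * fd (rfun q) = Ring.inverse (fd s) * fd r := by
      apply hts.mul_left_cancel
      rw [e1, e2, ← map_mul, ← map_mul, h2]
    rw [e3, ← mul_assoc, Ring.mul_inverse_cancel _ (hU s hs), one_mul]
  refine ⟨{ toFun := F, map_one' := ?_, map_mul' := ?_, map_zero' := ?_, map_add' := ?_ },
    fun q s hs r h => spec q s hs r h⟩
  · have := spec 1 1 h1Sl 1 (by rw [mul_one])
    rwa [map_one, one_mul] at this
  · intro q1 q2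
    obtain ⟨t, ht, u, htu⟩ := hOre.2 (sfun q2) (hsfun q2) (rfun q1)
    -- t * rfun q1 = u * sfun q2
    have hmem : t * sfun q1 ∈ Sl := hmulSl t ht _ (hsfun q1)
    have h1 : fl (t * sfun q1) * (q1 * q2) = fl (u * rfun q2) := by
      calc fl (t * sfun q1) * (q1 * q2)
          = fl t * ((fl (sfun q1) * q1) * q2) := by rw [map_mul, mul_assoc, mul_assoc]
        _ = fl (t * rfun q1) * q2 := by rw [hrfun q1, map_mul, mul_assoc]
        _ = fl u * (fl (sfun q2) * q2) := by rw [htu, map_mul, mul_assoc]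
        _ = fl (u * rfun q2) := by rw [hrfun q2, map_mul]
    have hA := spec (q1 * q2) _ hmem _ h1
    have hB : fd (t * sfun q1) * (F q1 * F q2) = fd (u * rfun q2) := by
      calc fd (t * sfun q1) * (F q1 * F q2)
          = fd t * ((fd (sfun q1) * F q1) * F q2) := by rw [map_mul, mul_assoc, mul_assoc]
        _ = fd (t * rfun q1) * F q2 := by
            rw [spec q1 _ (hsfun q1) _ (hrfun q1), map_mul, mul_assoc]
        _ = fd u * (fd (sfun q2) * F q2) := by rw [htu, map_mul, mul_assoc]
        _ = fd (u * rfun q2) := by rw [spec q2 _ (hsfun q2) _ (hrfun q2), map_mul]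
    exact (hU _ hmem).mul_left_cancel (hA.trans hB.symm)
  · have := spec 0 1 h1Sl 0 (by rw [mul_zero, map_zero])
    rwa [map_one, one_mul, map_zero] at this
  · intro q1 q2
    obtain ⟨t, ht, u, htu⟩ := hOre.2 (sfun q1) (hsfun q1) (sfun q2)
    -- t * sfun q2 = u * sfun q1
    have hmem : t * sfun q2 ∈ Sl := hmulSl t ht _ (hsfun q2)
    have h1 : fl (t * sfun q2) * (q1 + q2) = fl (u * rfun q1 + t * rfun q2) := by
      rw [mul_add, map_add]
      congr 1
      · calc fl (t * sfun q2) * q1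
            = fl u * (fl (sfun q1) * q1) := by rw [htu, map_mul, mul_assoc]
          _ = fl (u * rfun q1) := by rw [hrfun q1, map_mul]
      · calc fl (t * sfun q2) * q2
            = fl t * (fl (sfun q2) * q2) := by rw [map_mul, mul_assoc]
          _ = fl (t * rfun q2) := by rw [hrfun q2, map_mul]
    have hA := spec (q1 + q2) _ hmem _ h1
    have hB : fd (t * sfun q2) * (F q1 + F q2) = fd (u * rfun q1 + t * rfun q2) := by
      rw [mul_add, map_add]
      congr 1
      · rw [htu, map_mul, mul_assoc, spec q1 _ (hsfun q1) _ (hrfun q1), ← map_mul]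
      · rw [map_mul, mul_assoc, spec q2 _ (hsfun q2) _ (hrfun q2), ← map_mul]
    exact (hU _ hmem).mul_left_cancel (hA.trans hB.symm)

/-- Proposition 1Mar15: the canonical homomorphism `φ : Q_l(R) → 'Q_l(R)` and its
properties. Here `Sl = S_l(R)` (largest left Ore set of regular elements),
`Sd = 'S_l(R)` (largest left denominator set contained in `'C_R`), `Ql = Q_l(R)` and
`Qd = 'Q_l(R)`. -/
theorem canonicalHom_largestLeftQuotient_to_leftRegularLeftQuotient {R : Type u} [Ring R]
    (Sl : Set R) (hOre : IsLeftOre Sl) (hSlsub : Sl ⊆ reg R)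
    (hSlmax : ∀ T : Set R, IsLeftOre T → T ⊆ reg R → T ⊆ Sl)
    (Sd : Set R) (hd : IsLeftDenom Sd) (hdsub : Sd ⊆ lReg R)
    (hdmax : ∀ T : Set R, IsLeftDenom T → T ⊆ lReg R → T ⊆ Sd)
    (Ql : Type u) [Ring Ql] (fl : R →+* Ql) (hlocl : IsLeftLoc Sl fl)
    (Qd : Type u) [Ring Qd] (fd : R →+* Qd) (hlocd : IsLeftLoc Sd fd) :
    -- (1)
    (Sl ⊆ Sd ∧ Sd ⊆ lReg R ∧ ass Sl ⊆ ass Sd ∧ ass Sd ⊆ ass (lReg R)) ∧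
    -- (2) φ exists, is an R-homomorphism, and ker φ = S_l(R)⁻¹'a
    (∃ φ : Ql →+* Qd,
      (∀ r : R, φ (fl r) = fd r) ∧
      ∀ q : Ql, φ q = 0 ↔ ∃ s ∈ Sl, ∃ b ∈ ass Sd, fl s * q = fl b) ∧
    -- (3) φ is an isomorphism iff 'a = 0 iff S_l(R) = 'S_l(R)
    (∀ φ : Ql →+* Qd, (∀ r : R, φ (fl r) = fd r) →
      ((Function.Bijective φ ↔ ass Sd = {0}) ∧
       (Function.Bijective φ ↔ Sl = Sd))) ∧
    -- (4) Q_l(R) and 'Q_l(R) are R-isomorphic iff 'a = 0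
    ((∃ ψ : Ql ≃+* Qd, ∀ (r : R) (q : Ql), ψ (fl r * q) = fd r * ψ q) ↔
      ass Sd = {0}) := by
  classical
  have h1Sl : (1:R) ∈ Sl := hOre.1.1
  have h1Sd : (1:R) ∈ Sd := hd.1.1.1
  have hregSl : ∀ s ∈ Sl, ∀ r : R, s * r = 0 → r = 0 := fun s hs r h => (hSlsub hs).2 r h
  have hSlSd : Sl ⊆ Sd := by
    apply hdmax
    · exact ⟨hOre, fun r s hs h => ⟨1, h1Sl, by rw [(hSlsub hs).1 r h, mul_zero]⟩⟩
    · exact fun s hs => (hSlsub hs).1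
  have hass0 : ∀ b ∈ ass Sl, b = (0:R) := by
    rintro b ⟨s, hs, hsb⟩; exact hregSl s hs b hsb
  have h0assSd : (0:R) ∈ ass Sd := ⟨1, h1Sd, mul_zero 1⟩
  have hfl0 : ∀ r : R, fl r = 0 → r = 0 := fun r h => hass0 r ((hlocl.2.2 r).1 h)
  have hfdker : ∀ r : R, fd r = 0 ↔ r ∈ ass Sd := hlocd.2.2
  have hUl : ∀ s ∈ Sl, IsUnit (fl s) := hlocl.1
  have hUd : ∀ s ∈ Sd, IsUnit (fd s) := hlocd.1
  obtain ⟨φ₀, spec₀⟩ := exists_phi_aux Sl Sd hOre hregSl hSlSd fl fd hlocl hlocd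
  have genspec : ∀ (φ : Ql →+* Qd), (∀ r : R, φ (fl r) = fd r) →
      ∀ q : Ql, ∀ s ∈ Sl, ∀ r : R, fl s * q = fl r → fd s * φ q = fd r := by
    intro φ hφ q s hs r h
    rw [← hφ s, ← map_mul, h, hφ]
  have hφ₀ : ∀ r : R, φ₀ (fl r) = fd r := by
    intro r
    have := spec₀ (fl r) 1 h1Sl r (by rw [map_one, one_mul])
    rwa [map_one, one_mul] at this
  have E : ass Sd = {0} ↔ Sl = Sd := by
    constructor
    · intro h0
      refine Set.Subset.antisymm hSlSd (hSlmax Sd hd.1 ?_)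
      intro s hs
      refine ⟨hdsub hs, ?_⟩
      intro x hx
      have hx0 : fd x = 0 := by
        have h1 : fd s * fd x = fd s * 0 := by rw [← map_mul, hx, map_zero, mul_zero]
        exact (hUd s hs).mul_left_cancel h1
      have := (hfdker x).1 hx0
      rw [h0] at this
      exact this
    · intro h
      apply Set.eq_singleton_iff_unique_mem.mpr
      exact ⟨h0assSd, fun b hb => hass0 b (by rw [h]; exact hb)⟩
  have P : ∀ (φ : Ql →+* Qd), (∀ r : R, φ (fl r) = fd r) →
      (Function.Bijective φ ↔ ass Sd = {0}) := by
    intro φ hφ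
    constructor
    · intro hbij
      apply Set.eq_singleton_iff_unique_mem.mpr
      refine ⟨h0assSd, ?_⟩
      intro b hb
      have h1 : φ (fl b) = φ 0 := by rw [hφ, map_zero, (hfdker b).2 hb]
      exact hfl0 b (hbij.1 h1)
    · intro h0
      have hSleq : Sl = Sd := E.1 h0
      constructor
      · intro q1 q2 hq
        have h12 : φ (q1 - q2) = 0 := by rw [map_sub, hq, sub_self]
        obtain ⟨s, hs, r, hr⟩ := hlocl.2.1 (q1 - q2)
        have hrd : fd r = 0 := by
          have := genspec φ hφ (q1 - q2) s hs r hr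
          rw [h12, mul_zero] at this
          exact this.symm
        have hr0 : r = 0 := by
          have := (hfdker r).1 hrd
          rw [h0] at this; exact this
        have h2 : fl s * (q1 - q2) = fl s * 0 := by rw [hr, hr0, map_zero, mul_zero]
        exact sub_eq_zero.mp ((hUl s hs).mul_left_cancel h2)
      · intro q'
        obtain ⟨s, hs, r, hr⟩ := hlocd.2.1 q'
        have hsSl : s ∈ Sl := by rw [hSleq]; exact hs
        obtain ⟨u, hu⟩ := hUl s hsSl
        refine ⟨↑u⁻¹ * fl r, ?_⟩
        have h1 : fd s * φ (↑u⁻¹ * fl r) = fd s * q' := by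
          rw [hr, ← hφ r, ← hφ s, ← map_mul]
          congr 1
          rw [← hu, ← mul_assoc, u.mul_inv, one_mul]
        exact (hUd s hs).mul_left_cancel h1
  have part2ker : ∀ q : Ql, φ₀ q = 0 ↔ ∃ s ∈ Sl, ∃ b ∈ ass Sd, fl s * q = fl b := by
    intro q
    constructor
    · intro h
      obtain ⟨s, hs, r, hr⟩ := hlocl.2.1 q
      have := spec₀ q s hs r hr
      rw [h, mul_zero] at this
      exact ⟨s, hs, r, (hfdker r).1 this.symm, hr⟩
    · rintro ⟨s, hs, b, hb, hsb⟩
      have h1 : fd s * φ₀ q = fd s * 0 := by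
        rw [spec₀ q s hs b hsb, (hfdker b).2 hb, mul_zero]
      exact (hUd s (hSlSd hs)).mul_left_cancel h1
  refine ⟨⟨hSlSd, hdsub, ?_, ?_⟩, ⟨φ₀, hφ₀, part2ker⟩,
    fun φ hφ => ⟨P φ hφ, (P φ hφ).trans E⟩, ?_⟩
  · rintro b ⟨s, hs, hsb⟩; exact ⟨s, hSlSd hs, hsb⟩
  · rintro b ⟨s, hs, hsb⟩; exact ⟨s, hdsub hs, hsb⟩
  · constructor
    · rintro ⟨ψ, hψ⟩
      have hψfl : ∀ r : R, ψ (fl r) = fd r := by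
        intro r
        have := hψ r 1
        rwa [mul_one, map_one, mul_one] at this
      apply Set.eq_singleton_iff_unique_mem.mpr
      refine ⟨h0assSd, ?_⟩
      intro b hb
      have h1 : ψ (fl b) = ψ 0 := by rw [hψfl, map_zero, (hfdker b).2 hb]
      exact hfl0 b (ψ.injective h1)
    · intro h0
      have hbij : Function.Bijective φ₀ := (P φ₀ hφ₀).2 h0
      refine ⟨RingEquiv.ofBijective φ₀ hbij, ?_⟩
      intro r q
      show φ₀ (fl r * q) = fd r * φ₀ q
      rw [map_mul, hφ₀]

end Bavula
end

section
/- Suppose that R is a ring, U is a uniform left ideal of R, u ∈ 'C_U, and K = ker(·u_R) := {x ∈ R | xu = 0}. Then: (1) U ∩ K = 0 and U ⊕ K is an essential left ideal of R; (2) if I is a left ideal of R such that U ⊆ I, then U ⊕ (K ∩ I) is an essential left R-submodule of I. -/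
universe u

namespace Bavula

/-- Lemma a27Feb15: if `U` is a uniform left ideal, `u ∈ 'C_U` and
`K = ker(·u_R) = {x ∈ R | x u = 0}`, then `U ⊕ K` is an essential left ideal of `R`,
and for any left ideal `I ⊇ U`, `U ⊕ (K ∩ I)` is an essential submodule of `I`. -/
theorem uniform_leftRegular_essential {R : Type u} [Ring R]
    (U : Submodule R R) (hU : UniformIdeal U)
    (u : R) (hu : u ∈ lRegIn U)
    (K : Submodule R R) (hK : ∀ x : R, x ∈ K ↔ x * u = 0) :
    -- (1)
    (U ⊓ K = ⊥ ∧ EssIdeal (U ⊔ K)) ∧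
    -- (2)
    (∀ I : Submodule R R, U ≤ I →
      U ⊓ (K ⊓ I) = ⊥ ∧ EssIn (U ⊔ K ⊓ I) I) := by
  obtain ⟨huU, huinj⟩ := hu
  obtain ⟨hUne, hUuni⟩ := hU
  -- U ⊓ K = ⊥
  have hUK : U ⊓ K = ⊥ := by
    rw [eq_bot_iff]
    rintro x ⟨hxU, hxK⟩
    exact huinj x hxU ((hK x).mp hxK)
  -- u ≠ 0
  have hune : u ≠ 0 := by
    rintro rfl
    apply hUne
    rw [eq_bot_iff]
    intro x hx
    exact huinj x hx (mul_zero x)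
  have huu : u * u ≠ 0 := fun h => hune (huinj u huU h)
  -- the linear map x ↦ x * u
  set f : R →ₗ[R] R := LinearMap.toSpanSingleton R R u with hf
  have hfval : ∀ x : R, f x = x * u := fun x => rfl
  -- general essentiality claim
  have key : ∀ I : Submodule R R, U ≤ I → EssIn (U ⊔ K ⊓ I) I := by
    intro I hUI
    refine ⟨sup_le hUI inf_le_right, ?_⟩
    intro W hWI hW
    by_cases hWu : W.map f = ⊥
    · -- W ≤ K ⊓ I
      have hWK : W ≤ U ⊔ K ⊓ I := by
        intro w hw
        have : f w ∈ W.map f := Submodule.mem_map_of_mem hw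
        rw [hWu, Submodule.mem_bot] at this
        exact Submodule.mem_sup_right ⟨(hK w).mpr this, hWI hw⟩
      rw [inf_eq_right.mpr hWK]
      exact hW
    · -- W.map f and U.map f are nonzero submodules of U
      have hWfU : W.map f ≤ U := by
        rintro _ ⟨w, _, rfl⟩
        exact U.smul_mem w huU
      have hUfU : U.map f ≤ U := by
        rintro _ ⟨v, _, rfl⟩
        exact U.smul_mem v huU
      have hUf : U.map f ≠ ⊥ := by
        intro h
        have : f u ∈ U.map f := Submodule.mem_map_of_mem huU
        rw [h, Submodule.mem_bot] at this
        exact huu this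
      have := hUuni (W.map f) (U.map f) hWfU hUfU hWu hUf
      obtain ⟨x, ⟨hxW, hxU⟩, hx0⟩ := Submodule.exists_mem_ne_zero_of_ne_bot this
      obtain ⟨j, hjW, hjx⟩ := hxW
      obtain ⟨v, hvU, hvx⟩ := hxU
      have hj0 : j ≠ 0 := by
        rintro rfl
        apply hx0
        rw [← hjx, hfval, zero_mul]
      refine Submodule.ne_bot_iff _ |>.mpr ⟨j, ⟨?_, hjW⟩, hj0⟩
      have hjv : j - v ∈ K ⊓ I := by
        refine ⟨(hK _).mpr ?_, I.sub_mem (hWI hjW) (hUI hvU)⟩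
        rw [sub_mul, ← hfval, ← hfval, hjx, hvx, sub_self]
      have : j = v + (j - v) := by abel
      rw [this]
      exact Submodule.add_mem _ (Submodule.mem_sup_left hvU) (Submodule.mem_sup_right hjv)
  refine ⟨⟨hUK, ?_⟩, fun I hUI => ⟨?_, key I hUI⟩⟩
  · intro J hJ
    have h := (key ⊤ le_top).2 J le_top hJ
    rwa [inf_top_eq] at h
  · rw [eq_bot_iff]
    calc U ⊓ (K ⊓ I) ≤ U ⊓ K := inf_le_inf_left U inf_le_left
    _ = ⊥ := hUK

end Bavula
end

section
/- Let R be a ring such that 'C_R is a left denominator set of R and 'Q_{l,cl}(R) := 'C_R⁻¹R is a semisimple Artinian ring, and let a := ass_R('C_R). Then ζ_l(R, a) ⊆ a, where ζ_l(R, a) = {r ∈ R | Ir = 0 for some essential left ideal I of R with a ⊆ I} is the left singular ideal of R over a. -/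
universe u

namespace Bavula

section Aux

variable {R : Type u} [Ring R]

/-- Right multiplication by `x` as an `R`-linear endomorphism of `R`. -/
def mulRightLin (x : R) : R →ₗ[R] R where
  toFun y := y * x
  map_add' a b := add_mul a b x
  map_smul' r y := by simp only [smul_eq_mul, RingHom.id_apply, mul_assoc]

@[simp] lemma mulRightLin_apply (x y : R) : mulRightLin x y = y * x := rfl

lemma essIdeal_top : EssIdeal (⊤ : Submodule R R) := by
  intro J hJ
  simpa using hJ

lemma essIdeal_mono {I I' : Submodule R R} (h : I ≤ I') (hI : EssIdeal I) : EssIdeal I' := by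
  intro J hJ hbot
  exact hI J hJ (le_bot_iff.mp ((inf_le_inf_right J h).trans hbot.le))

lemma essIdeal_inf {I I' : Submodule R R} (hI : EssIdeal I) (hI' : EssIdeal I') :
    EssIdeal (I ⊓ I') := by
  intro J hJ
  rw [inf_assoc]
  exact hI _ (hI' J hJ)

lemma essIdeal_comap (x : R) {I : Submodule R R} (hI : EssIdeal I) :
    EssIdeal (Submodule.comap (mulRightLin x) I) := by
  intro J hJ
  by_cases h : Submodule.map (mulRightLin x) J = ⊥
  · have hle : J ≤ Submodule.comap (mulRightLin x) I := by
      intro y hy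
      have : mulRightLin x y ∈ Submodule.map (mulRightLin x) J :=
        Submodule.mem_map_of_mem hy
      rw [h] at this
      simp only [Submodule.mem_bot] at this
      simp only [Submodule.mem_comap, this]
      exact I.zero_mem
    rw [inf_eq_right.mpr hle]
    exact hJ
  · have := hI _ h
    rw [Submodule.ne_bot_iff] at this ⊢
    obtain ⟨ξ, hξ, hξ0⟩ := this
    obtain ⟨y, hyJ, hyx⟩ := hξ.2
    refine ⟨y, ⟨?_, hyJ⟩, ?_⟩
    · exact Submodule.mem_comap.mpr (hyx.symm ▸ hξ.1)
    · rintro rfl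
      exact hξ0 (by simpa using hyx.symm)

lemma ass_mul_right {α : R} (hα : α ∈ ass (lReg R)) (r : R) : α * r ∈ ass (lReg R) := by
  obtain ⟨s, hs, hsa⟩ := hα
  exact ⟨s, hs, by rw [← mul_assoc, hsa, zero_mul]⟩

lemma sing_zero : (0 : R) ∈ leftSingularOver (ass (lReg R)) :=
  ⟨⊤, essIdeal_top, fun _ _ => trivial, fun x _ => mul_zero x⟩

lemma sing_add {ρ ρ' : R} (h : ρ ∈ leftSingularOver (ass (lReg R)))
    (h' : ρ' ∈ leftSingularOver (ass (lReg R))) :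
    ρ + ρ' ∈ leftSingularOver (ass (lReg R)) := by
  obtain ⟨I, hIe, hIa, hIk⟩ := h
  obtain ⟨I', hIe', hIa', hIk'⟩ := h'
  refine ⟨I ⊓ I', essIdeal_inf hIe hIe', fun α hα => ⟨hIa hα, hIa' hα⟩, fun x hx => ?_⟩
  rw [mul_add, hIk x hx.1, hIk' x hx.2, add_zero]

lemma sing_left {ρ : R} (r : R) (h : ρ ∈ leftSingularOver (ass (lReg R))) :
    r * ρ ∈ leftSingularOver (ass (lReg R)) := by
  obtain ⟨I, hIe, hIa, hIk⟩ := h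
  refine ⟨Submodule.comap (mulRightLin r) I, essIdeal_comap r hIe, fun α hα => ?_, fun x hx => ?_⟩
  · simp only [SetLike.mem_coe, Submodule.mem_comap, mulRightLin_apply]
    exact hIa (ass_mul_right hα r)
  · simp only [Submodule.mem_comap, mulRightLin_apply] at hx
    rw [← mul_assoc]
    exact hIk _ hx

lemma sing_right {ρ : R} (h : ρ ∈ leftSingularOver (ass (lReg R))) (r : R) :
    ρ * r ∈ leftSingularOver (ass (lReg R)) := by
  obtain ⟨I, hIe, hIa, hIk⟩ := h
  exact ⟨I, hIe, hIa, fun x hx => by rw [← mul_assoc, hIk x hx, zero_mul]⟩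

lemma sing_cancel {ρ t : R} (ht : t ∈ lReg R)
    (h : ρ * t ∈ leftSingularOver (ass (lReg R))) :
    ρ ∈ leftSingularOver (ass (lReg R)) := by
  obtain ⟨I, hIe, hIa, hIk⟩ := h
  refine ⟨I, hIe, hIa, fun x hx => ?_⟩
  exact ht (x * ρ) (by rw [mul_assoc]; exact hIk x hx)

end Aux

/-- Proposition a2Mar2015: if `'Q_{l,cl}(R)` is a semisimple Artinian ring and
`a = ass_R('C_R)`, then `ζ_l(R, a) ⊆ a`. -/
theorem leftSingularOver_subset_ass {R : Type u} [Ring R]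
    (hden : IsLeftDenom (lReg R))
    (Q : Type u) [Ring Q] (f : R →+* Q)
    (hloc : IsLeftLoc (lReg R) f) (hss : IsSemisimpleRing Q) :
    leftSingularOver (ass (lReg R)) ⊆ ass (lReg R) := by
  intro ρ₀ hρ₀
  by_contra hna
  have hfρ₀ : f ρ₀ ≠ 0 := fun h => hna ((hloc.2.2 ρ₀).mp h)
  set ζ := leftSingularOver (ass (lReg R)) with hζdef
  set W : Submodule Q Q := Submodule.span Q (f '' ζ) with hWdef
  -- right multiplication closure on generators
  have hgen : ∀ ρ ∈ ζ, ∀ q : Q, f ρ * q ∈ W := by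
    intro ρ hρ q
    obtain ⟨t, ht, r, hr⟩ := hloc.2.1 q
    obtain ⟨s', hs', r', hOre⟩ := hden.1.2 t ht ρ
    have hρ' : r' ∈ ζ := sing_cancel ht (hOre ▸ sing_left s' hρ)
    have key : f s' * (f ρ * q) = f (r' * r) := by
      calc f s' * (f ρ * q) = f (s' * ρ) * q := by rw [map_mul, mul_assoc]
        _ = f (r' * t) * q := by rw [hOre]
        _ = f r' * (f t * q) := by rw [map_mul, mul_assoc]
        _ = f r' * f r := by rw [hr]
        _ = f (r' * r) := (map_mul f r' r).symm
    obtain ⟨u, hu⟩ := hloc.1 s' hs'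
    have hfq : f ρ * q = (↑u⁻¹ : Q) * f (r' * r) := by
      rw [← key, ← hu, ← mul_assoc, u.inv_mul, one_mul]
    rw [hfq]
    have hmem : f (r' * r) ∈ W :=
      Submodule.subset_span ⟨r' * r, sing_right hρ' r, rfl⟩
    simpa [smul_eq_mul] using W.smul_mem (↑u⁻¹ : Q) hmem
  -- right multiplication closure on W
  have hWmul : ∀ ω ∈ W, ∀ q : Q, ω * q ∈ W := by
    intro ω hω q
    refine Submodule.span_induction (p := fun x _ => x * q ∈ W) ?_ ?_ ?_ ?_ hω
    · rintro x ⟨ρ, hρ, rfl⟩; exact hgen ρ hρ q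
    · simp only [zero_mul]; exact W.zero_mem
    · intro x y hx hy hxq hyq; rw [add_mul]; exact W.add_mem hxq hyq
    · intro a x hx hxq
      simpa [smul_eq_mul, mul_assoc] using W.smul_mem a hxq
  -- complement and the pseudo-idempotent z
  obtain ⟨V, hV⟩ := exists_isCompl W
  have hone : (1 : Q) ∈ W ⊔ V := by rw [hV.sup_eq_top]; trivial
  obtain ⟨z, hzW, v, hvV, hzv⟩ := Submodule.mem_sup.mp hone
  have hK1 : ∀ ω ∈ W, ω * z = ω := by
    intro ω hω
    have h1 : ω * v ∈ W := hWmul ω hω v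
    have h2 : ω * v ∈ V := by simpa [smul_eq_mul] using V.smul_mem ω hvV
    have h0 : ω * v = 0 := by
      have hd := hV.disjoint
      rw [Submodule.disjoint_def] at hd
      exact hd _ h1 h2
    have hω1 : ω * (z + v) = ω := by rw [hzv, mul_one]
    rw [mul_add, h0, add_zero] at hω1
    exact hω1
  have hz1 : ∀ q : Q, z * q * z = z * q := fun q => hK1 _ (hWmul z hzW q)
  have hfρ₀W : f ρ₀ ∈ W := Submodule.subset_span ⟨ρ₀, hρ₀, rfl⟩
  have hzne : z ≠ 0 := by
    intro h
    exact hfρ₀ (by rw [← hK1 _ hfρ₀W, h, mul_zero])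
  -- write z as a combination of generators
  obtain ⟨n, c, g, hsum⟩ := Submodule.mem_span_set'.mp hzW
  have hgim : ∀ i, ∃ ρ, ρ ∈ ζ ∧ f ρ = (g i : Q) := fun i => (g i).2
  choose ρs hρsζ hρsf using hgim
  -- common denominator
  have hCD : ∀ (m : ℕ) (cc : Fin m → Q), ∃ s ∈ lReg R, ∀ i, ∃ r : R, f s * cc i = f r := by
    intro m
    induction m with
    | zero => exact fun cc => ⟨1, hden.1.1.1, fun i => i.elim0⟩
    | succ k ih =>
      intro cc
      obtain ⟨s, hs, hr⟩ := ih fun i => cc i.succ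
      obtain ⟨t, ht, r₀, h₀⟩ := hloc.2.1 (f s * cc 0)
      refine ⟨t * s, hden.1.1.2.1 t ht s hs, fun i => ?_⟩
      refine Fin.cases ?_ (fun j => ?_) i
      · exact ⟨r₀, by rw [map_mul, mul_assoc, h₀]⟩
      · obtain ⟨r, hrj⟩ := hr j
        exact ⟨t * r, by rw [map_mul, map_mul, mul_assoc, hrj]⟩
  obtain ⟨s₀, hs₀, hden₀⟩ := hCD n c
  choose rs hrs using hden₀
  -- the element w
  set w : R := ∑ i, rs i * ρs i with hwdef
  have hwζ : w ∈ ζ := by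
    rw [hwdef]
    exact Finset.sum_induction _ (· ∈ ζ) (fun a b ha hb => sing_add ha hb) sing_zero
      (fun i _ => sing_left (rs i) (hρsζ i))
  have hfw : f w = f s₀ * z := by
    rw [hwdef, map_sum, ← hsum, Finset.mul_sum]
    refine Finset.sum_congr rfl fun i _ => ?_
    rw [map_mul, hρsf i, ← hrs i, smul_eq_mul, mul_assoc]
  obtain ⟨Iw, hIwe, hIwa, hIwk⟩ := hwζ
  have haw : ∀ α ∈ ass (lReg R), α * w = 0 := fun α hα => hIwk α (hIwa hα)
  have hAu : IsUnit (f s₀) := hloc.1 s₀ hs₀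
  have hcol : ∀ p q : Q, p * z * q * z = p * z * q := by
    intro p q
    rw [mul_assoc p z q, mul_assoc p (z * q) z, hz1 q]
  -- w * w ≠ 0
  have hww : w * w ≠ 0 := by
    intro h
    have h2 : f w * f w = 0 := by rw [← map_mul, h, map_zero]
    rw [hfw, mul_assoc] at h2
    have h3 : z * (f s₀ * z) = 0 := (hAu.mul_right_eq_zero).mp h2
    rw [← mul_assoc, hz1 (f s₀)] at h3
    exact hzne ((hAu.mul_left_eq_zero).mp h3)
  -- the annihilator of w*w and the contradiction
  have hNe : EssIdeal (LinearMap.ker (mulRightLin (w * w))) := by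
    refine essIdeal_mono (fun y hy => ?_) hIwe
    simp only [LinearMap.mem_ker, mulRightLin_apply]
    rw [← mul_assoc, hIwk y hy, zero_mul]
  have hspan : Submodule.span R {w * w} ≠ ⊥ := by
    rw [Ne, Submodule.span_singleton_eq_bot]
    exact hww
  have hsbot : LinearMap.ker (mulRightLin (w * w)) ⊓ Submodule.span R {w * w} = ⊥ := by
    rw [Submodule.eq_bot_iff]
    rintro ξ ⟨hξN, hξs⟩
    obtain ⟨x, hx⟩ := Submodule.mem_span_singleton.mp hξs
    rw [smul_eq_mul] at hx
    have hξ0 : ξ * (w * w) = 0 := by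
      simpa [mulRightLin_apply] using (LinearMap.mem_ker.mp hξN)
    have h4 : x * (w * w) * (w * w) = 0 := by rw [hx]; exact hξ0
    have h5 : f x * f s₀ * z * f s₀ * z * f s₀ * z * f s₀ * z = 0 := by
      have h5' := congrArg f h4
      rw [map_zero] at h5'
      simp only [map_mul, hfw] at h5'
      simpa only [← mul_assoc] using h5'
    rw [hcol (f x * f s₀ * z * f s₀ * z * f s₀) (f s₀),
        hcol (f x * f s₀ * z * f s₀) (f s₀),
        hcol (f x * f s₀) (f s₀)] at h5
    rw [hAu.mul_left_eq_zero, hAu.mul_left_eq_zero, hAu.mul_left_eq_zero] at h5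
    have h7 : x * w ∈ ass (lReg R) := by
      apply (hloc.2.2 (x * w)).mp
      rw [map_mul, hfw, ← mul_assoc]
      exact h5
    rw [← hx, ← mul_assoc]
    exact haw _ h7
  exact (hNe _ hspan) hsbot


end Bavula
end

section
/- Suppose that S and T are left denominator sets of a ring R with S ⊆ T, and let φ : S⁻¹R → T⁻¹R, s⁻¹r ↦ s⁻¹r, be the induced ring homomorphism. Then: (1) φ is a monomorphism if and only if ass_R(S) = ass_R(T); (2) φ is an epimorphism if and only if for each t ∈ T there exists r ∈ R with rt ∈ S + ass_R(T); (3) φ is an isomorphism if and only if ass_R(S) = ass_R(T) and for each t ∈ T there exists r ∈ R with rt ∈ S; (4) if in addition T ⊆ 'C_R, then φ is an isomorphism if and only if ass_R(S) = ass_R(T) and for each t ∈ T there exists r ∈ 'C_R with rt ∈ S. -/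
universe u

namespace Bavula

open scoped Pointwise in
/-- Lemma a7Mar15: for left denominator sets `S ⊆ T` of `R`, the induced homomorphism
`φ : S⁻¹R → T⁻¹R` is injective/surjective/bijective iff the stated conditions hold. -/
theorem inducedHom_between_localizations {R : Type u} [Ring R]
    (S T : Set R) (hS : IsLeftDenom S) (hT : IsLeftDenom T) (hST : S ⊆ T)
    (Q1 : Type u) [Ring Q1] (f1 : R →+* Q1) (h1 : IsLeftLoc S f1)
    (Q2 : Type u) [Ring Q2] (f2 : R →+* Q2) (h2 : IsLeftLoc T f2)
    (φ : Q1 →+* Q2) (hφ : ∀ r : R, φ (f1 r) = f2 r) :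
    -- (1)
    (Function.Injective φ ↔ ass S = ass T) ∧
    -- (2)
    (Function.Surjective φ ↔ ∀ t ∈ T, ∃ r : R, r * t ∈ S + ass T) ∧
    -- (3)
    (Function.Bijective φ ↔
      (ass S = ass T ∧ ∀ t ∈ T, ∃ r : R, r * t ∈ S)) ∧
    -- (4)
    (T ⊆ lReg R →
      (Function.Bijective φ ↔
        (ass S = ass T ∧ ∀ t ∈ T, ∃ r ∈ lReg R, r * t ∈ S))) := by
  have hsub : ass S ⊆ ass T := by
    rintro r ⟨s, hs, h⟩; exact ⟨s, hST hs, h⟩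
  have part1 : Function.Injective φ ↔ ass S = ass T := by
    constructor
    · intro hinj
      refine Set.Subset.antisymm hsub ?_
      intro r hr
      have h0 : f2 r = 0 := (h2.2.2 r).mpr hr
      have : φ (f1 r) = φ 0 := by rw [hφ, map_zero, h0]
      exact (h1.2.2 r).mp (hinj this)
    · intro hass
      rw [injective_iff_map_eq_zero]
      intro q hq
      obtain ⟨s, hs, r, heq⟩ := h1.2.1 q
      have h2r : f2 r = 0 := by
        have h := congrArg φ heq
        rw [map_mul, hφ, hφ, hq, mul_zero] at h
        exact h.symm
      have hrS : r ∈ ass S := hass ▸ (h2.2.2 r).mp h2r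
      have hf1r : f1 r = 0 := (h1.2.2 r).mpr hrS
      have hu := h1.1 s hs
      have hz : f1 s * q = f1 s * 0 := by rw [mul_zero, heq, hf1r]
      exact hu.mul_left_cancel hz
  have part2 : Function.Surjective φ ↔ ∀ t ∈ T, ∃ r : R, r * t ∈ S + ass T := by
    constructor
    · intro hsur t ht
      have hu := h2.1 t ht
      obtain ⟨q, hq⟩ := hsur ↑hu.unit⁻¹
      obtain ⟨s, hs, r, heq⟩ := h1.2.1 q
      have h3 : f2 s * ↑hu.unit⁻¹ = f2 r := by
        have h := congrArg φ heq
        rwa [map_mul, hφ, hφ, hq] at h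
      have h4 : f2 s = f2 (r * t) := by
        have h := congrArg (· * f2 t) h3
        simp only [map_mul] at h ⊢
        rw [← h, mul_assoc]
        have : (↑hu.unit⁻¹ : Q2) * f2 t = 1 := hu.val_inv_mul
        rw [this, mul_one]
      have hmem : r * t - s ∈ ass T := by
        apply (h2.2.2 _).mp
        rw [map_sub, ← h4, sub_self]
      refine ⟨r, ?_⟩
      have := Set.add_mem_add hs hmem
      have he : s + (r * t - s) = r * t := by abel
      rwa [he] at this
    · intro hcond q2
      obtain ⟨t, ht, r, heq⟩ := h2.2.1 q2
      obtain ⟨r', hmem⟩ := hcond t ht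
      rw [Set.mem_add] at hmem
      obtain ⟨s, hs, a, ha, hsum⟩ := hmem
      have hfa : f2 a = 0 := (h2.2.2 a).mpr ha
      have h4 : f2 r' * f2 t = f2 s := by
        have h : f2 (r' * t) = f2 (s + a) := congrArg f2 hsum.symm
        rwa [map_mul, map_add, hfa, add_zero] at h
      set w := (h1.1 s hs).unit with hw
      have hwspec : (↑w : Q1) = f1 s := (h1.1 s hs).unit_spec
      refine ⟨↑w⁻¹ * f1 (r' * r), ?_⟩
      have hinv : φ ↑w⁻¹ * f2 s = 1 := by
        rw [← hφ, ← hwspec, ← map_mul, w.inv_mul, map_one]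
      have hkey : f2 s * q2 = f2 (r' * r) := by
        rw [← h4, mul_assoc, heq, map_mul]
      rw [map_mul, hφ, ← hkey, ← mul_assoc, hinv, one_mul]
  have part3 : Function.Bijective φ ↔
      (ass S = ass T ∧ ∀ t ∈ T, ∃ r : R, r * t ∈ S) := by
    constructor
    · rintro ⟨hinj, hsur⟩
      refine ⟨part1.mp hinj, fun t ht => ?_⟩
      obtain ⟨r, hmem⟩ := part2.mp hsur t ht
      rw [Set.mem_add] at hmem
      obtain ⟨s, hs, a, ha, hsum⟩ := hmem
      have ha' : a ∈ ass S := (part1.mp hinj) ▸ ha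
      obtain ⟨s', hs', hs'a⟩ := ha'
      refine ⟨s' * r, ?_⟩
      have h : s' * r * t = s' * s := by
        rw [mul_assoc, ← hsum, mul_add, hs'a, add_zero]
      rw [h]
      exact hS.1.1.2.1 s' hs' s hs
    · rintro ⟨hass, hcond⟩
      refine ⟨part1.mpr hass, part2.mpr fun t ht => ?_⟩
      obtain ⟨r, hr⟩ := hcond t ht
      refine ⟨r, ?_⟩
      have h0 : (0 : R) ∈ ass T := ⟨1, hT.1.1.1, mul_zero 1⟩
      have := Set.add_mem_add hr h0
      rwa [add_zero] at this
  refine ⟨part1, part2, part3, fun hTreg => ?_⟩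
  rw [part3]
  constructor
  · rintro ⟨hass, hcond⟩
    refine ⟨hass, fun t ht => ?_⟩
    obtain ⟨r, hrt⟩ := hcond t ht
    refine ⟨r, fun x hx => ?_, hrt⟩
    have h : x * (r * t) = 0 := by rw [← mul_assoc, hx, zero_mul]
    exact hTreg (hST hrt) x h
  · rintro ⟨hass, hcond⟩
    exact ⟨hass, fun t ht => (hcond t ht).imp fun r hr => hr.2⟩

end Bavula
end
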